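/- Let (L,·) be a loop, A(L) a subgroup of its automorphism group, and H(L) the A(L)-holomorph of (L,·). If H(L) is an Osborn loop, then for all x, y ∈ L and all φ ∈ A(L): (x·(y·x))·(x^λ·φ⁻¹(x)) = x·(y·φ⁻¹(x)), and (φ⁻¹(x))^λ·x = (x^λ·φ⁻¹(x))^λ. -/

import Mathlib

/-- A loop: a set with multiplication, left and right division, and a
two-sided identity element, such that all translations are bijections
(expressed via the division operations). -/
structure Loop (L : Type*) where
  mul : L → L → L
  ldiv : L → L → L
  rdiv : L → L → L
  e : L
  mul_ldiv : ∀ x y, mul x (ldiv x y) = y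
  ldiv_mul : ∀ x y, ldiv x (mul x y) = y
  rdiv_mul : ∀ x y, mul (rdiv y x) x = y
  mul_rdiv : ∀ x y, rdiv (mul y x) x = y
  e_mul : ∀ x, mul e x = x
  mul_e : ∀ x, mul x e = x

namespace Loop

variable {L : Type*} (Q : Loop L)

/-- The left inverse `x^λ`, the unique element with `x^λ · x = e`. -/
def linv (x : L) : L := Q.rdiv Q.e x

/-- The right inverse `x^ρ`, the unique element with `x · x^ρ = e`. -/
def rinv (x : L) : L := Q.ldiv x Q.e

/-- A loop is Osborn if `x·((y·z)·x) = (x·((y·x^λ)·x))·(z·x)` for all `x,y,z`. -/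
def IsOsborn : Prop :=
  ∀ x y z, Q.mul x (Q.mul (Q.mul y z) x) =
    Q.mul (Q.mul x (Q.mul (Q.mul y (Q.linv x)) x)) (Q.mul z x)

/-- The automorphism group of a loop, as a subgroup of the permutation group. -/
def autGroup : Subgroup (Equiv.Perm L) where
  carrier := {α | ∀ x y, α (Q.mul x y) = Q.mul (α x) (α y)}
  one_mem' := fun _ _ => rfl
  mul_mem' := by
    intro α β ha hb x y
    simp only [Equiv.Perm.mul_apply]
    rw [hb x y, ha]
  inv_mem' := by
    intro α ha x y
    apply α.injective
    rw [ha]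
    simp

theorem mem_autGroup_iff {α : Equiv.Perm L} :
    α ∈ Q.autGroup ↔ ∀ x y, α (Q.mul x y) = Q.mul (α x) (α y) := Iff.rfl

theorem aut_fix_e {α : Equiv.Perm L} (hα : α ∈ Q.autGroup) : α Q.e = Q.e := by
  have h1 : α (Q.mul Q.e Q.e) = Q.mul (α Q.e) (α Q.e) := hα Q.e Q.e
  rw [Q.mul_e] at h1
  have h2 : Q.mul (α Q.e) (α Q.e) = Q.mul (α Q.e) Q.e := by rw [Q.mul_e, ← h1]
  have h3 := congrArg (Q.ldiv (α Q.e)) h2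
  rwa [Q.ldiv_mul, Q.ldiv_mul] at h3

/-- The `A`-holomorph of a loop `(L,·)`: the loop on `A × L` with multiplication
`(α,x)∘(β,y) = (α∘β, β(x)·y)`, where `A` is a subgroup of the automorphism group. -/
def Holomorph (A : Subgroup (Equiv.Perm L)) (hA : A ≤ Q.autGroup) : Loop (A × L) where
  mul p q := (p.1 * q.1, Q.mul ((q.1 : Equiv.Perm L) p.2) q.2)
  ldiv p r := (p.1⁻¹ * r.1, Q.ldiv (((p.1⁻¹ * r.1 : A) : Equiv.Perm L) p.2) r.2)
  rdiv r q := (r.1 * q.1⁻¹, ((q.1⁻¹ : A) : Equiv.Perm L) (Q.rdiv r.2 q.2))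
  e := (1, Q.e)
  mul_ldiv p r := by
    refine Prod.ext ?_ ?_
    · simp
    · simp [Q.mul_ldiv]
  ldiv_mul p q := by
    refine Prod.ext ?_ ?_
    · simp
    · simp [inv_mul_cancel_left, Q.ldiv_mul]
  rdiv_mul r q := by
    refine Prod.ext ?_ ?_
    · simp
    · simp [Q.rdiv_mul]
  mul_rdiv p q := by
    refine Prod.ext ?_ ?_
    · simp
    · simp [Q.mul_rdiv]
  e_mul p := by
    refine Prod.ext ?_ ?_
    · simp
    · simp [Q.aut_fix_e (hA p.1.2), Q.e_mul]
  mul_e p := by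
    refine Prod.ext ?_ ?_
    · simp
    · simp [Q.mul_e]

/-- A triple `(A,B,C)` of bijections of `L` is an autotopism of `(L,·)` if
`A(x)·B(y) = C(x·y)` for all `x, y`. -/
def IsAutotopism (A B C : L → L) : Prop :=
  Function.Bijective A ∧ Function.Bijective B ∧ Function.Bijective C ∧
    ∀ x y, Q.mul (A x) (B y) = C (Q.mul x y)

/-- A bijection `U` is ρ-regular if `(I,U,U)` is an autotopism. -/
def IsRhoRegular (U : L → L) : Prop := Q.IsAutotopism id U U

/-- A bijection `U` is λ-regular if `(U,I,U)` is an autotopism. -/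
def IsLambdaRegular (U : L → L) : Prop := Q.IsAutotopism U id U

/-- `U'` is an adjoint of the bijection `U` if `(U, U'⁻¹, I)` is an autotopism. -/
def IsMuAdjoint (U U' : L → L) : Prop :=
  letI : Nonempty L := ⟨Q.e⟩
  Function.Bijective U' ∧ Q.IsAutotopism U (Function.invFun U') id

/-- `U` is μ-regular if it has an adjoint, i.e. `(U, U'⁻¹, I)` is an
autotopism for some bijection `U'`. The μ-regular bijections form `Φ(L,·)`. -/
def IsMuRegular (U : L → L) : Prop := ∃ U', Q.IsMuAdjoint U U'

/-- `U'` belongs to `Ψ(L,·)`, the group of adjoints of μ-regular bijections. -/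
def IsPsi (U' : L → L) : Prop := ∃ U, Q.IsMuAdjoint U U'

/-- Membership in the left nucleus `N_λ`. -/
def InNlambda (a : L) : Prop := ∀ y z, Q.mul a (Q.mul y z) = Q.mul (Q.mul a y) z

/-- Membership in the middle nucleus `N_μ`. -/
def InNmu (a : L) : Prop := ∀ y z, Q.mul (Q.mul y a) z = Q.mul y (Q.mul a z)

/-- Membership in the right nucleus `N_ρ`. -/
def InNrho (a : L) : Prop := ∀ y z, Q.mul (Q.mul y z) a = Q.mul y (Q.mul z a)

/-- Membership in the nucleus `N = N_λ ∩ N_μ ∩ N_ρ`. -/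
def InNucleus (a : L) : Prop := Q.InNlambda a ∧ Q.InNmu a ∧ Q.InNrho a

/-- Membership in the center `Z = N ∩ C`. -/
def InCenter (a : L) : Prop := Q.InNucleus a ∧ ∀ x, Q.mul a x = Q.mul x a

end Loop

namespace Loop
variable {L : Type*} (Q : Loop L)

lemma rdiv_e (z : L) : Q.rdiv Q.e z = Q.linv z := rfl

lemma linv_mul (x : L) : Q.mul (Q.linv x) x = Q.e := Q.rdiv_mul x Q.e

lemma mul_rinv (x : L) : Q.mul x (Q.rinv x) = Q.e := Q.mul_ldiv x Q.e

lemma eq_linv_of_mul {b c : L} (h : Q.mul b c = Q.e) : b = Q.linv c := by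
  have h2 := Q.mul_rdiv c b
  rw [h] at h2
  exact h2.symm

lemma aut_linv {α : Equiv.Perm L} (hα : α ∈ Q.autGroup) (x : L) :
    α (Q.linv x) = Q.linv (α x) := by
  apply Q.eq_linv_of_mul
  rw [← hα, Q.linv_mul, Q.aut_fix_e hα]

end Loop

/-- If `H(L)` is an Osborn loop, then for all `x, y ∈ L` and all
`φ ∈ A(L)`: `(x·(y·x))·(x^λ·φ⁻¹(x)) = x·(y·φ⁻¹(x))` and
`(φ⁻¹(x))^λ·x = (x^λ·φ⁻¹(x))^λ`. -/

theorem holomorph_osborn_identities_phi_mid {L : Type*} (Q : Loop L)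
    (A : Subgroup (Equiv.Perm L)) (hA : A ≤ Q.autGroup) :
    (Q.Holomorph A hA).IsOsborn →
      ∀ (x y : L) (φ : A),
        Q.mul (Q.mul x (Q.mul y x)) (Q.mul (Q.linv x) (((φ⁻¹ : A) : Equiv.Perm L) x)) = Q.mul x (Q.mul y (((φ⁻¹ : A) : Equiv.Perm L) x)) ∧
        Q.mul (Q.linv (((φ⁻¹ : A) : Equiv.Perm L) x)) x = Q.linv (Q.mul (Q.linv x) (((φ⁻¹ : A) : Equiv.Perm L) x)) := by
  intro hOs x y φ
  have hφm : ∀ a b : L, (↑φ : Equiv.Perm L) (Q.mul a b)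
      = Q.mul ((↑φ : Equiv.Perm L) a) ((↑φ : Equiv.Perm L) b) := hA φ.2
  have hφim : ∀ a b : L, (↑φ : Equiv.Perm L)⁻¹ (Q.mul a b)
      = Q.mul ((↑φ : Equiv.Perm L)⁻¹ a) ((↑φ : Equiv.Perm L)⁻¹ b) := hA (φ⁻¹ : A).2
  have hcoe : ((φ⁻¹ : A) : Equiv.Perm L) = (↑φ : Equiv.Perm L)⁻¹ := rfl
  rw [hcoe]
  set c : L := (↑φ : Equiv.Perm L)⁻¹ x with hc
  have hφc : (↑φ : Equiv.Perm L) c = x := by rw [hc]; exact Equiv.apply_symm_apply _ _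
  -- key1 : x·((b·d)·c) = (x·((b·x^λ)·x))·(d·c)
  have key1 : ∀ b d : L,
      Q.mul x (Q.mul (Q.mul b d) c) =
        Q.mul (Q.mul x (Q.mul (Q.mul b (Q.linv x)) x)) (Q.mul d c) := by
    intro b d
    have h1 := congrArg Prod.snd (hOs (φ, c)
      ((1 : A), (↑φ : Equiv.Perm L)⁻¹ b) ((1 : A), (↑φ : Equiv.Perm L)⁻¹ d))
    simp only [Loop.Holomorph, Loop.linv, Subgroup.coe_mul, OneMemClass.coe_one,
      Equiv.Perm.coe_mul, Equiv.Perm.coe_one, Function.comp_apply, id_eq,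
      Equiv.Perm.one_apply, Equiv.Perm.mul_apply, one_mul, mul_one, inv_one] at h1
    simp only [Loop.rdiv_e, hφm, hφim, Q.aut_linv (hA φ.2),
      Q.aut_linv (Q.autGroup.inv_mem (hA φ.2)),
      InvMemClass.coe_inv, (show ∀ (f : Equiv.Perm L) a, f (f⁻¹ a) = a from fun f a => Equiv.apply_symm_apply f a),
      (show ∀ (f : Equiv.Perm L) a, f⁻¹ (f a) = a from fun f a => Equiv.symm_apply_apply f a), ← hc, hφc] at h1
    exact h1
  -- key2 : x·((v·d)·x) = (x·((v·c^λ)·c))·(d·x)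
  have key2 : ∀ v d : L,
      Q.mul x (Q.mul (Q.mul v d) x) =
        Q.mul (Q.mul x (Q.mul (Q.mul v (Q.linv c)) c)) (Q.mul d x) := by
    intro v d
    have h2 := congrArg Prod.snd (hOs ((1 : A), x) (φ, (↑φ : Equiv.Perm L) v) (φ⁻¹, d))
    simp only [Loop.Holomorph, Loop.linv, Subgroup.coe_mul, OneMemClass.coe_one,
      Equiv.Perm.coe_mul, Equiv.Perm.coe_one, Function.comp_apply, id_eq,
      Equiv.Perm.one_apply, Equiv.Perm.mul_apply, one_mul, mul_one, inv_one] at h2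
    simp only [Loop.rdiv_e, hφm, hφim, Q.aut_linv (hA φ.2),
      Q.aut_linv (Q.autGroup.inv_mem (hA φ.2)),
      InvMemClass.coe_inv, (show ∀ (f : Equiv.Perm L) a, f (f⁻¹ a) = a from fun f a => Equiv.apply_symm_apply f a),
      (show ∀ (f : Equiv.Perm L) a, f⁻¹ (f a) = a from fun f a => Equiv.symm_apply_apply f a), ← hc, hφc] at h2
    exact h2
  -- part 1, for arbitrary y'
  have p1 : ∀ y' : L,
      Q.mul (Q.mul x (Q.mul y' x)) (Q.mul (Q.linv x) c) = Q.mul x (Q.mul y' c) := by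
    intro y'
    have h := key1 (Q.rdiv y' (Q.linv x)) (Q.linv x)
    rw [Q.rdiv_mul] at h
    exact h.symm
  refine ⟨p1 y, ?_⟩
  -- part 2
  set y0 : L := Q.rdiv (Q.rinv x) c with hy0
  have hy0c : Q.mul y0 c = Q.rinv x := Q.rdiv_mul c (Q.rinv x)
  have hstepA : Q.mul x (Q.mul y0 x) = Q.mul (Q.linv c) x := by
    have h := key2 (Q.rdiv y0 (Q.linv c)) (Q.linv c)
    rw [Q.rdiv_mul, hy0c, Q.mul_rinv, Q.e_mul] at h
    exact h
  have hstepB : Q.mul (Q.mul x (Q.mul y0 x)) (Q.mul (Q.linv x) c) = Q.e := by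
    rw [p1 y0, hy0c, Q.mul_rinv]
  rw [← hstepA]
  exact Q.eq_linv_of_mul hstepB
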